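/- Let E be a real inner product space, w, x ∈ E with w ≠ 0, y ∈ {−1, 1}, and ε > 0. Define the worst-case perturbation δ⋆ = −(ε·y/‖w‖) • w. Then for every δ ∈ E with ‖δ‖ ≤ ε, the logistic loss satisfies log(1 + exp(−y·⟪w, x + δ⟫)) ≤ log(1 + exp(−y·⟪w, x + δ⋆⟫)). In other words, δ⋆ maximizes the logistic loss over the closed ℓ₂-ball of radius ε. -/

import Mathlib

open RealInnerProductSpace

/-- Closed-form solution of the inner maximization for the logistic loss under
`ℓ₂`-bounded attacks: the FGM perturbation `δ⋆ = −(εy/‖w‖) w` maximizes the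
logistic loss over the closed ball of radius `ε`. -/
theorem logistic_loss_l2_worst_case_perturbation
    {E : Type*} [NormedAddCommGroup E] [InnerProductSpace ℝ E]
    (w x : E) (hw : w ≠ 0) (y : ℝ) (hy : y = -1 ∨ y = 1) (ε : ℝ) (hε : 0 < ε) :
    ∀ δ : E, ‖δ‖ ≤ ε →
      Real.log (1 + Real.exp (-(y * ⟪w, x + δ⟫))) ≤
        Real.log (1 + Real.exp (-(y * ⟪w, x + (-(ε * y / ‖w‖)) • w⟫))) := by
  intro δ hδ
  have hwn : (0:ℝ) < ‖w‖ := norm_pos_iff.mpr hw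
  have hy2 : y * y = 1 := by rcases hy with h | h <;> simp [h]
  have hkey : y * ⟪w, x + (-(ε * y / ‖w‖)) • w⟫ ≤ y * ⟪w, x + δ⟫ := by
    rw [inner_add_right, inner_add_right, inner_smul_right, real_inner_self_eq_norm_sq]
    have h1 : y * (-(ε * y / ‖w‖) * (‖w‖ * ‖w‖)) = -(ε * ‖w‖) := by
      field_simp
      linear_combination -hy2
    have h2 : -(ε * ‖w‖) ≤ y * ⟪w, δ⟫ := by
      have hcs : |⟪w, δ⟫| ≤ ‖w‖ * ‖δ‖ := abs_real_inner_le_norm w δ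
      have hyabs : |y * ⟪w, δ⟫| ≤ ‖w‖ * ε := by
        rw [abs_mul]
        have : |y| = 1 := by rcases hy with h | h <;> simp [h]
        rw [this, one_mul]
        exact hcs.trans (mul_le_mul_of_nonneg_left hδ hwn.le)
      nlinarith [neg_abs_le (y * ⟪w, δ⟫)]
    nlinarith
  have hexp : Real.exp (-(y * ⟪w, x + δ⟫)) ≤
      Real.exp (-(y * ⟪w, x + (-(ε * y / ‖w‖)) • w⟫)) :=
    Real.exp_le_exp.mpr (by linarith)
  have hpos : (0:ℝ) < 1 + Real.exp (-(y * ⟪w, x + δ⟫)) := by positivity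
  exact Real.log_le_log hpos (by linarith)
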